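/- Let G be a finite group. If G is not an NCI^{(2)}-group, then there exists a G-regular subgroup R ≠ G_r of Hol(G) such that the S-ring A = V(G_r R, G) is normal and not CI. If moreover G is a p-group, then A is a p-S-ring. -/

import Mathlib

/-- The right regular representation `G →* Sym(G)`, `g ↦ (x ↦ x * g)`
(made a homomorphism w.r.t. the permutation product `(f*g) x = f (g x)`). -/
def rightRegHom (G : Type*) [Group G] : G →* Equiv.Perm G where
  toFun g := Equiv.mulRight g⁻¹
  map_one' := by ext x; simp
  map_mul' a b := by ext x; simp [mul_assoc]

/-- The group of right translations `G_r ≤ Sym(G)`. -/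
def rightReg (G : Type*) [Group G] : Subgroup (Equiv.Perm G) :=
  (rightRegHom G).range

/-- A subgroup of `Sym(α)` is regular if it acts simply transitively. -/
def IsRegularPermSubgroup {α : Type*} (R : Subgroup (Equiv.Perm α)) : Prop :=
  ∀ x y : α, ∃! r : R, (r : Equiv.Perm α) x = y

/-- A `G`-regular subgroup of `Sym(G)`: a regular subgroup isomorphic to `G`. -/
def IsGRegular (G : Type*) [Group G] (R : Subgroup (Equiv.Perm G)) : Prop :=
  IsRegularPermSubgroup R ∧ Nonempty (R ≃* G)

/-- The holomorph `Hol(G) = G_r ⋊ Aut(G)` as a subgroup of `Sym(G)`. -/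
def hol (G : Type*) [Group G] : Subgroup (Equiv.Perm G) where
  carrier := {f : Equiv.Perm G | ∃ σ : MulAut G, ∃ a : G, ∀ g : G, f g = σ g * a}
  one_mem' := ⟨1, 1, fun g => by simp⟩
  mul_mem' := by
    rintro f f' ⟨σ, a, hf⟩ ⟨σ', a', hf'⟩
    refine ⟨σ * σ', σ a' * a, fun g => ?_⟩
    rw [Equiv.Perm.mul_apply, hf' g, hf, map_mul]
    simp [mul_assoc]
  inv_mem' := by
    rintro f ⟨σ, a, hf⟩
    refine ⟨σ⁻¹, σ⁻¹ (a⁻¹), fun g => f.injective ?_⟩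
    rw [Equiv.Perm.coe_inv, Equiv.apply_symm_apply, hf, ← map_mul]
    simp

/-- The 2-closure of a permutation group: all permutations preserving each
orbit of the componentwise action on ordered pairs. -/
def twoClosure {α : Type*} (K : Subgroup (Equiv.Perm α)) : Subgroup (Equiv.Perm α) where
  carrier := {f : Equiv.Perm α | ∀ x y : α, ∃ k ∈ K, f x = k x ∧ f y = k y}
  one_mem' := fun x y => ⟨1, K.one_mem, rfl, rfl⟩
  mul_mem' := by
    intro f g hf hg x y
    obtain ⟨k, hk, hk1, hk2⟩ := hg x y
    obtain ⟨k', hk', h1, h2⟩ := hf (g x) (g y)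
    refine ⟨k' * k, mul_mem hk' hk, ?_, ?_⟩
    · rw [Equiv.Perm.mul_apply, Equiv.Perm.mul_apply, h1, hk1]
    · rw [Equiv.Perm.mul_apply, Equiv.Perm.mul_apply, h2, hk2]
  inv_mem' := by
    intro f hf x y
    obtain ⟨k, hk, h1, h2⟩ := hf (f⁻¹ x) (f⁻¹ y)
    refine ⟨k⁻¹, inv_mem hk, k.injective ?_, k.injective ?_⟩
    · rw [Equiv.Perm.coe_inv k, Equiv.apply_symm_apply, ← h1, Equiv.Perm.coe_inv, Equiv.apply_symm_apply]
    · rw [Equiv.Perm.coe_inv k, Equiv.apply_symm_apply, ← h2, Equiv.Perm.coe_inv, Equiv.apply_symm_apply]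

/-- A permutation group `K` with `G_r ≤ K` is `G`-transjugate if every
`G`-regular subgroup of `K` is conjugate in `K` to `G_r`. -/
def IsTransjugate (G : Type*) [Group G] (K : Subgroup (Equiv.Perm G)) : Prop :=
  ∀ R : Subgroup (Equiv.Perm G), R ≤ K → IsGRegular G R →
    ∃ k ∈ K, Subgroup.map (MulAut.conj k).toMonoidHom R = rightReg G

/-- `G` is an `NCI⁽²⁾`-group: every 2-closed subgroup of `Sym(G)` between
`G_r` and `Hol(G)` is `G`-transjugate. -/
def IsNCI2 (G : Type*) [Group G] : Prop :=
  ∀ K : Subgroup (Equiv.Perm G), rightReg G ≤ K → K ≤ hol G →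
    twoClosure K = K → IsTransjugate G K

/-- The natural embedding `Sym(α) × Sym(β) →* Sym(α × β)`. -/
def prodPermHom (α β : Type*) : Equiv.Perm α × Equiv.Perm β →* Equiv.Perm (α × β) where
  toFun p := Equiv.prodCongr p.1 p.2
  map_one' := by ext x <;> simp
  map_mul' p q := by ext x <;> simp


section AuxNCI

variable {G : Type*} [Group G]

lemma le_twoClosure' {α : Type*} (K : Subgroup (Equiv.Perm α)) : K ≤ twoClosure K :=
  fun f hf _ _ => ⟨f, hf, rfl, rfl⟩

lemma twoClosure_mono' {α : Type*} {K L : Subgroup (Equiv.Perm α)} (h : K ≤ L) :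
    twoClosure K ≤ twoClosure L := by
  intro f hf x y
  obtain ⟨k, hk, h1, h2⟩ := hf x y
  exact ⟨k, h hk, h1, h2⟩

lemma conj_rightReg_mem {k : Equiv.Perm G} (hk : k ∈ hol G) {ρ : Equiv.Perm G}
    (hρ : ρ ∈ rightReg G) : k * ρ * k⁻¹ ∈ rightReg G := by
  obtain ⟨σ, a, hf⟩ := hk
  obtain ⟨g, rfl⟩ := hρ
  refine ⟨a⁻¹ * σ g * a, ?_⟩
  ext x
  have h2 : x = σ (k⁻¹ x) * a := by
    conv_lhs => rw [← (show k (k⁻¹ x) = x by simp), hf]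
  show x * (a⁻¹ * σ g * a)⁻¹ = k ((k⁻¹ x) * g⁻¹)
  rw [hf, map_mul, map_inv]
  conv_lhs => rw [h2]
  group

lemma hol_le_normalizer : hol G ≤ Subgroup.normalizer (rightReg G : Set (Equiv.Perm G)) := by
  intro k hk
  rw [Subgroup.mem_normalizer_iff]
  intro ρ
  constructor
  · exact fun hρ => conj_rightReg_mem hk hρ
  · intro hρ
    have h := conj_rightReg_mem ((hol G).inv_mem hk) hρ
    have : k⁻¹ * (k * ρ * k⁻¹) * k⁻¹⁻¹ = ρ := by group
    rwa [this] at h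

lemma rightRegHom_injective : Function.Injective (rightRegHom G) := by
  intro a b hab
  have h := congrArg (fun f : Equiv.Perm G => f 1) hab
  simp only [rightRegHom, MonoidHom.coe_mk, OneHom.coe_mk, Equiv.coe_mulRight, one_mul] at h
  exact inv_injective h

lemma isPGroup_rightReg {p : ℕ} (hG : IsPGroup p G) : IsPGroup p (rightReg G) :=
  hG.of_equiv (MonoidHom.ofInjective rightRegHom_injective)

end AuxNCI

/-- If a finite group `G` is not an `NCI⁽²⁾`-group, then
there is a `G`-regular subgroup `R ≠ G_r` of `Hol(G)` such that the
S-ring `A = V(G_r R, G)` is normal (its automorphism group, the 2-closure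
of `G_r R = ⟨G_r, R⟩`, lies in `Hol(G)`) and not CI (the 2-closure is not
`G`-transjugate). If moreover `G` is a `p`-group, then `A` is a
`p`-S-ring: every orbit of the point stabilizer of `1` has `p`-power
size. -/
theorem noncinorm {G : Type*} [Group G] [Fintype G] (h : ¬ IsNCI2 G) :
    ∃ R : Subgroup (Equiv.Perm G), IsGRegular G R ∧ R ≠ rightReg G ∧
      R ≤ hol G ∧
      twoClosure (rightReg G ⊔ R) ≤ hol G ∧
      ¬ IsTransjugate G (twoClosure (rightReg G ⊔ R)) ∧
      (∀ p : ℕ, p.Prime → IsPGroup p G → ∀ x : G, ∃ k : ℕ,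
        {g : G | ∃ f ∈ rightReg G ⊔ R, f 1 = 1 ∧ f x = g}.ncard = p ^ k) := by
  rw [IsNCI2] at h
  push_neg at h
  obtain ⟨K, hK1, hK2, hK3, hKT⟩ := h
  rw [IsTransjugate] at hKT
  push_neg at hKT
  obtain ⟨R, hRK, hRreg, hno⟩ := hKT
  have hLK : twoClosure (rightReg G ⊔ R) ≤ K := by
    calc twoClosure (rightReg G ⊔ R) ≤ twoClosure K := twoClosure_mono' (sup_le hK1 hRK)
    _ = K := hK3
  refine ⟨R, hRreg, ?_, hRK.trans hK2, hLK.trans hK2, ?_, ?_⟩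
  · intro heq
    have h1 : Subgroup.map (MulAut.conj (1 : Equiv.Perm G)).toMonoidHom R = rightReg G := by
      rw [heq]
      ext f
      simp [Subgroup.mem_map]
    exact hno 1 K.one_mem h1
  · intro hT
    obtain ⟨k, hk, hmap⟩ := hT R (le_trans le_sup_right (le_twoClosure' _)) hRreg
    exact hno k (hLK hk) hmap
  · intro p hp hpG x
    haveI : Fact p.Prime := ⟨hp⟩
    obtain ⟨e⟩ := hRreg.2
    have hRp : IsPGroup p R := hpG.of_equiv e.symm
    have hsup : IsPGroup p (rightReg G ⊔ R : Subgroup (Equiv.Perm G)) :=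
      IsPGroup.to_sup_of_normal_left' (isPGroup_rightReg hpG) hRp
        ((hRK.trans hK2).trans hol_le_normalizer)
    set H₁ : Subgroup (Equiv.Perm G) :=
      (rightReg G ⊔ R) ⊓ MulAction.stabilizer (Equiv.Perm G) (1 : G) with hH₁
    have hH₁p : IsPGroup p H₁ := hsup.to_inf_left
    have hset : {g : G | ∃ f ∈ rightReg G ⊔ R, f 1 = 1 ∧ f x = g} = MulAction.orbit H₁ x := by
      ext g
      simp only [Set.mem_setOf_eq, MulAction.mem_orbit_iff]
      constructor
      · rintro ⟨f, hf, h1, rfl⟩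
        exact ⟨⟨f, hf, h1⟩, rfl⟩
      · rintro ⟨⟨f, hf1, hf2⟩, rfl⟩
        exact ⟨f, hf1, hf2, rfl⟩
    obtain ⟨k, hk⟩ := hH₁p.card_orbit x
    exact ⟨k, by rw [hset, ← Nat.card_coe_set_eq, hk]⟩
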